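/- The Mellin transform of the absolute value of the characteristic polynomial of a Haar-random n × n unitary matrix gives cumulants Γ_j(β) of Re log Z equal to ((2^(j−1) − 1)/2^(j−1)) Σ_{k=0}^{n−1} ψ^(j−1)(1 + kβ/2), for the circular β-ensemble with β ∈ {1, 2, 4}. In particular, for β = 2 and j ≥ 3, |Γ_j| ≤ ((2^(j−1)−1)/2^(j−1)) · (2 + Σ_{k≥1}((j−2)!/k^(j−1) + (j−1)!/k^j)) ≤ j! · (2π²/3). -/

import Mathlib

open Real Filter Set Topology
open scoped ContDiff

noncomputable def LG : ℝ → ℝ := fun x => Real.log (Real.Gamma x)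


lemma analyticAt_Gamma {x : ℝ} (hx : 0 < x) : AnalyticAt ℝ Real.Gamma x := by
  have h1 : AnalyticAt ℂ Complex.Gamma (x:ℂ) := by
    rw [Complex.analyticAt_iff_eventually_differentiableAt]
    have : {z : ℂ | 0 < z.re} ∈ nhds (x:ℂ) := by
      apply (isOpen_lt continuous_const Complex.continuous_re).mem_nhds; simpa using hx
    filter_upwards [this] with z hz
    apply Complex.differentiableAt_Gamma
    intro m hm
    rw [hm] at hz
    simp at hz
    have : (0:ℝ) ≤ m := m.cast_nonneg
    linarith [hz]
  have h2 : AnalyticAt ℝ (fun y : ℝ => (Complex.Gamma (y:ℂ)).re) x := by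
    apply (Complex.reCLM.analyticAt _).comp
    exact (h1.restrictScalars).comp (Complex.ofRealCLM.analyticAt x)
  apply h2.congr
  filter_upwards with y
  rw [Complex.Gamma_ofReal]; simp

lemma contDiffOn_LG : ContDiffOn ℝ ∞ LG (Ioi 0) := by
  intro x hx
  have hx' : (0:ℝ) < x := hx
  have h1 : ContDiffAt ℝ ∞ Real.Gamma x := (analyticAt_Gamma hx').contDiffAt
  have h2 : ContDiffAt ℝ ∞ Real.log (Real.Gamma x) :=
    Real.contDiffAt_log.2 (Real.Gamma_pos_of_pos hx').ne'
  exact (h2.comp x h1).contDiffWithinAt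

section helpers
variable {S : Set ℝ}

lemma diffAt_of_cd (hS : IsOpen S) {f : ℝ → ℝ} (hf : ContDiffOn ℝ ∞ f S) {x : ℝ} (hx : x ∈ S) :
    DifferentiableAt ℝ f x := by
  have := (hf.differentiableOn (by simp)).differentiableAt (hS.mem_nhds hx)
  exact this

lemma contDiffOn_iteratedDeriv' (hS : IsOpen S) {f : ℝ → ℝ} (hf : ContDiffOn ℝ ∞ f S) (j : ℕ) :
    ContDiffOn ℝ ∞ (iteratedDeriv j f) S := by
  induction j with
  | zero => simpa using hf
  | succ j ih => rw [iteratedDeriv_succ]; exact ih.deriv_of_isOpen hS (le_of_eq rfl)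

lemma iteratedDeriv_comp_affine (hS : IsOpen S) {f : ℝ → ℝ} (hf : ContDiffOn ℝ ∞ f S) (c b : ℝ) (j : ℕ) :
    ∀ x : ℝ, c * x + b ∈ S →
      iteratedDeriv j (fun y => f (c * y + b)) x = c ^ j * iteratedDeriv j f (c * x + b) := by
  induction j with
  | zero => intro x _; simp
  | succ j ih =>
    intro x hx
    have hopen : IsOpen {y : ℝ | c * y + b ∈ S} :=
      hS.preimage (by continuity : Continuous fun y : ℝ => c * y + b)
    have hev : (iteratedDeriv j fun y => f (c * y + b)) =ᶠ[𝓝 x]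
        fun y => c ^ j * iteratedDeriv j f (c * y + b) := by
      filter_upwards [hopen.mem_nhds hx] with y hy
      exact ih y hy
    rw [iteratedDeriv_succ, hev.deriv_eq]
    have hdg : DifferentiableAt ℝ (iteratedDeriv j f) (c * x + b) :=
      diffAt_of_cd hS (contDiffOn_iteratedDeriv' hS hf j) hx
    have haff : HasDerivAt (fun y : ℝ => c * y + b) c x := by
      simpa using ((hasDerivAt_id x).const_mul c).add_const b
    have h1 : HasDerivAt (fun y => iteratedDeriv j f (c * y + b))
        (deriv (iteratedDeriv j f) (c * x + b) * c) x :=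
      by have := (hdg.hasDerivAt).comp x haff; exact this
    rw [(h1.const_mul (c ^ j)).deriv, iteratedDeriv_succ]
    ring

lemma iteratedDeriv_linComb (hS : IsOpen S) {u v : ℝ → ℝ} (hu : ContDiffOn ℝ ∞ u S) (hv : ContDiffOn ℝ ∞ v S)
    (C : ℝ) (j : ℕ) (hj : 1 ≤ j) :
    ∀ x ∈ S, iteratedDeriv j (fun s => C + u s - 2 * v s) x =
      iteratedDeriv j u x - 2 * iteratedDeriv j v x := by
  induction j with
  | zero => omega
  | succ j ih =>
    intro x hx
    rcases Nat.eq_or_lt_of_le hj with h1 | h1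
    · -- j + 1 = 1, i.e. j = 0
      have hj0 : j = 0 := by omega
      subst hj0
      have h : HasDerivAt (fun s => C + u s - 2 * v s)
          (deriv u x - 2 * deriv v x) x := by
        exact (((diffAt_of_cd hS hu hx).hasDerivAt.const_add C).sub
          ((diffAt_of_cd hS hv hx).hasDerivAt.const_mul 2))
      simp only [zero_add, iteratedDeriv_one]
      exact h.deriv
    · have hj' : 1 ≤ j := by omega
      have hev : (iteratedDeriv j fun s => C + u s - 2 * v s) =ᶠ[𝓝 x]
          fun s => iteratedDeriv j u s - 2 * iteratedDeriv j v s := by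
        filter_upwards [hS.mem_nhds hx] with y hy
        exact ih hj' y hy
      rw [iteratedDeriv_succ, hev.deriv_eq]
      have hdu := diffAt_of_cd hS (contDiffOn_iteratedDeriv' hS hu j) hx
      have hdv := diffAt_of_cd hS (contDiffOn_iteratedDeriv' hS hv j) hx
      rw [(hdu.hasDerivAt.fun_sub (hdv.hasDerivAt.const_mul 2)).deriv,
        iteratedDeriv_succ, iteratedDeriv_succ]

lemma iteratedDeriv_finsetSum (hS : IsOpen S) {ι : Type*} (t : Finset ι) {h : ι → ℝ → ℝ}
    (hh : ∀ k ∈ t, ContDiffOn ℝ ∞ (h k) S) (j : ℕ) :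
    ∀ x ∈ S, iteratedDeriv j (fun s => ∑ k ∈ t, h k s) x = ∑ k ∈ t, iteratedDeriv j (h k) x := by
  induction j with
  | zero => intro x _; simp
  | succ j ih =>
    intro x hx
    have hev : (iteratedDeriv j fun s => ∑ k ∈ t, h k s) =ᶠ[𝓝 x]
        fun s => ∑ k ∈ t, iteratedDeriv j (h k) s := by
      filter_upwards [hS.mem_nhds hx] with y hy
      exact ih y hy
    rw [iteratedDeriv_succ, hev.deriv_eq]
    have h1 : HasDerivAt (fun s => ∑ k ∈ t, iteratedDeriv j (h k) s)
        (∑ k ∈ t, deriv (iteratedDeriv j (h k)) x) x :=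
      HasDerivAt.fun_sum fun k hk =>
        (diffAt_of_cd hS (contDiffOn_iteratedDeriv' hS (hh k hk) j) hx).hasDerivAt
    rw [h1.deriv]
    exact Finset.sum_congr rfl fun k _ => (congrFun (iteratedDeriv_succ) x).symm

end helpers

-- key telescoping inequality
lemma key_ineq {a : ℝ} (ha : 0 < a) (m : ℕ) :
    ((m : ℝ) + 1) * ((a + 1) ^ (m + 2))⁻¹ ≤ (a ^ (m + 1))⁻¹ - ((a + 1) ^ (m + 1))⁻¹ := by
  set b : ℝ := a + 1 with hb
  have hab : a ≤ b := by simp [hb]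
  have hb0 : 0 < b := by linarith
  have hpow : ((m : ℝ) + 1) * a ^ m ≤ b ^ (m + 1) - a ^ (m + 1) := by
    have hg := geom_sum₂_mul b a (m + 1)
    have hba : b - a = 1 := by simp [hb]
    rw [hba, mul_one] at hg
    rw [← hg]
    calc ((m : ℝ) + 1) * a ^ m = ∑ _i ∈ Finset.range (m + 1), a ^ m := by
          simp [mul_comm]
      _ ≤ ∑ i ∈ Finset.range (m + 1), b ^ i * a ^ (m - i) := by
          apply Finset.sum_le_sum
          intro i hi
          rw [Finset.mem_range] at hi
          calc a ^ m = a ^ i * a ^ (m - i) := by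
                rw [← pow_add]; congr 1; omega
            _ ≤ b ^ i * a ^ (m - i) := by
                apply mul_le_mul_of_nonneg_right (pow_le_pow_left₀ ha.le hab i)
                  (pow_nonneg ha.le _)
  have h1 : (a ^ (m + 1))⁻¹ - (b ^ (m + 1))⁻¹
      = (b ^ (m + 1) - a ^ (m + 1)) / (a ^ (m + 1) * b ^ (m + 1)) := by
    field_simp
  rw [h1]
  calc ((m : ℝ) + 1) * (b ^ (m + 2))⁻¹ = ((m : ℝ) + 1) * a ^ m / (a ^ m * b ^ (m + 2)) := by
        rw [eq_div_iff (by positivity), mul_assoc]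
        congr 1
        rw [mul_comm (a ^ m), ← mul_assoc, inv_mul_cancel₀ (by positivity), one_mul]
    _ ≤ ((m : ℝ) + 1) * a ^ m / (a ^ (m + 1) * b ^ (m + 1)) := by
        apply div_le_div_of_nonneg_left (by positivity) (by positivity)
        calc a ^ (m + 1) * b ^ (m + 1) = a ^ m * (a * b ^ (m + 1)) := by ring
          _ ≤ a ^ m * (b * b ^ (m + 1)) :=
              mul_le_mul_of_nonneg_left
                (mul_le_mul_of_nonneg_right hab (by positivity)) (by positivity)
          _ = a ^ m * b ^ (m + 2) := by ring
    _ ≤ (b ^ (m + 1) - a ^ (m + 1)) / (a ^ (m + 1) * b ^ (m + 1)) := by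
        gcongr

-- bound on tail sums
lemma sum_range_pow_inv_le {z : ℝ} (hz : 0 < z) (m : ℕ) (N : ℕ) :
    ∑ i ∈ Finset.range N, ((z + i : ℝ) ^ (m + 2))⁻¹
      ≤ (z ^ (m + 2))⁻¹ + (1 / ((m : ℝ) + 1)) * (z ^ (m + 1))⁻¹ := by
  have hB : (0:ℝ) ≤ (z ^ (m + 2))⁻¹ + (1 / ((m : ℝ) + 1)) * (z ^ (m + 1))⁻¹ := by positivity
  cases N with
  | zero => simpa using hB
  | succ N =>
    rw [Finset.sum_range_succ']
    have h0 : ((z + (0:ℕ) : ℝ) ^ (m + 2))⁻¹ = (z ^ (m + 2))⁻¹ := by norm_num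
    rw [h0]
    rw [add_comm]
    apply add_le_add le_rfl
    have hterm : ∀ i : ℕ, ((z + (i + 1 : ℕ) : ℝ) ^ (m + 2))⁻¹
        ≤ (1 / ((m : ℝ) + 1)) * (((z + i) ^ (m + 1))⁻¹ - ((z + i + 1) ^ (m + 1))⁻¹) := by
      intro i
      have hzi : 0 < z + (i : ℝ) := by positivity
      have := key_ineq hzi m
      have hcast : (z + (i + 1 : ℕ) : ℝ) = z + i + 1 := by push_cast; ring
      rw [hcast]
      have hm1 : (0:ℝ) < (m : ℝ) + 1 := by positivity
      rw [one_div, ← div_eq_inv_mul, le_div_iff₀ hm1]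
      linarith [this]
    calc ∑ i ∈ Finset.range N, ((z + (i + 1 : ℕ) : ℝ) ^ (m + 2))⁻¹
        ≤ ∑ i ∈ Finset.range N, (1 / ((m : ℝ) + 1)) *
            (((z + i) ^ (m + 1))⁻¹ - ((z + i + 1) ^ (m + 1))⁻¹) :=
          Finset.sum_le_sum fun i _ => hterm i
      _ = (1 / ((m : ℝ) + 1)) * ∑ i ∈ Finset.range N,
            ((fun i : ℕ => ((z + i) ^ (m + 1))⁻¹) i - (fun i : ℕ => ((z + i) ^ (m + 1))⁻¹) (i + 1)) := by
          rw [Finset.mul_sum]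
          congr 1; ext i; congr 2; push_cast; ring
      _ ≤ (1 / ((m : ℝ) + 1)) * (z ^ (m + 1))⁻¹ := by
          rw [Finset.sum_range_sub']
          apply mul_le_mul_of_nonneg_left _ (by positivity)
          simp only [Nat.cast_zero, add_zero]
          have : (0:ℝ) ≤ ((z + N) ^ (m + 1))⁻¹ := by positivity
          linarith

lemma summable_pow_inv {z : ℝ} (hz : 0 < z) (m : ℕ) :
    Summable (fun i : ℕ => ((z + i : ℝ) ^ (m + 2))⁻¹) :=
  summable_of_sum_range_le (fun i => by positivity) (sum_range_pow_inv_le hz m)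

lemma tsum_pow_inv_le {z : ℝ} (hz : 0 < z) (m : ℕ) :
    ∑' i : ℕ, ((z + i : ℝ) ^ (m + 2))⁻¹
      ≤ (z ^ (m + 2))⁻¹ + (1 / ((m : ℝ) + 1)) * (z ^ (m + 1))⁻¹ :=
  Real.tsum_le_of_sum_range_le (fun i => by positivity) (sum_range_pow_inv_le hz m)

noncomputable def Pz (j : ℕ) (N : ℕ) (x : ℝ) : ℝ :=
  ∑ i ∈ Finset.range (N + 1), (x + i) ^ (-(j : ℤ))
noncomputable def Gz (j : ℕ) (x : ℝ) : ℝ := ∑' i : ℕ, (x + i) ^ (-(j : ℤ))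
noncomputable def dg (x : ℝ) : ℝ :=
  (-Real.eulerMascheroniConstant + -x⁻¹) + ∑' i : ℕ, (((i : ℝ) + 1)⁻¹ - (x + i + 1)⁻¹)
noncomputable def fseq (N : ℕ) (y : ℝ) : ℝ :=
  y * Real.log N + Real.log ((N.factorial : ℕ) : ℝ) - ∑ i ∈ Finset.range (N + 1), Real.log (y + i)
noncomputable def dseq (N : ℕ) (y : ℝ) : ℝ := Real.log N - Pz 1 N y

lemma zpow_negNat (x : ℝ) (j : ℕ) : x ^ (-(j:ℤ)) = (x ^ j)⁻¹ := by
  rw [zpow_neg, zpow_natCast]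

-- (A) pointwise convergence to log Gamma
lemma tendsto_fseq {x : ℝ} (hx : 0 < x) :
    Tendsto (fun N => fseq N x) atTop (𝓝 (LG x)) := by
  have h0 : Tendsto (fun N => Real.log (Real.GammaSeq x N)) atTop (𝓝 (LG x)) :=
    ((Real.continuousAt_log (Real.Gamma_pos_of_pos hx).ne').tendsto).comp
      (Real.GammaSeq_tendsto_Gamma x)
  apply h0.congr'
  filter_upwards [eventually_ge_atTop 1] with N hN
  have hN0 : (0:ℝ) < N := by exact_mod_cast hN
  have hprod : ∀ i ∈ Finset.range (N + 1), x + (i:ℝ) ≠ 0 :=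
    fun i _ => by positivity
  have hprodne : (∏ i ∈ Finset.range (N + 1), (x + (i:ℝ))) ≠ 0 :=
    Finset.prod_ne_zero_iff.2 hprod
  have hnum : (N:ℝ) ^ x * ((N.factorial : ℕ) : ℝ) ≠ 0 := by
    have := Real.rpow_pos_of_pos hN0 x
    have h2 : (0:ℝ) < ((N.factorial : ℕ) : ℝ) := by exact_mod_cast N.factorial_pos
    positivity
  rw [Real.GammaSeq, Real.log_div hnum hprodne,
    Real.log_mul (by positivity) (by
      have h2 : (0:ℝ) < ((N.factorial : ℕ) : ℝ) := by exact_mod_cast N.factorial_pos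
      positivity),
    Real.log_rpow hN0, Real.log_prod hprod]
  rfl

-- (B) derivative of fseq
lemma hasDerivAt_fseq (N : ℕ) {y : ℝ} (hy : 0 < y) :
    HasDerivAt (fseq N) (dseq N y) y := by
  have hsum : HasDerivAt (fun z => ∑ i ∈ Finset.range (N + 1), Real.log (z + i))
      (∑ i ∈ Finset.range (N + 1), (y + i)⁻¹) y := by
    apply HasDerivAt.fun_sum
    intro i _
    have h1 : HasDerivAt (fun z : ℝ => z + (i:ℝ)) 1 y := (hasDerivAt_id y).add_const _
    have h2 := h1.log (by positivity)
    simpa using h2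
  have h3 : HasDerivAt (fun z : ℝ => z * Real.log N + Real.log ((N.factorial : ℕ) : ℝ))
      (Real.log N) y := (hasDerivAt_mul_const _).add_const _
  have h4 := h3.sub hsum
  have : dseq N y = Real.log N - ∑ i ∈ Finset.range (N + 1), (y + i)⁻¹ := by
    unfold dseq Pz
    congr 1
    exact Finset.sum_congr rfl fun i _ => by rw [zpow_negNat, pow_one]
  rw [this]
  exact h4

-- (G) derivative of Pz
lemma hasDerivAt_Pz (j N : ℕ) {x : ℝ} (hx : 0 < x) :
    HasDerivAt (Pz j N) (-(j:ℝ) * Pz (j+1) N x) x := by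
  have h : HasDerivAt (fun y => ∑ i ∈ Finset.range (N + 1), (y + (i:ℝ)) ^ (-(j:ℤ)))
      (∑ i ∈ Finset.range (N + 1), (-(j:ℝ)) * (x + (i:ℝ)) ^ (-((j:ℕ):ℤ) - 1)) x := by
    apply HasDerivAt.fun_sum
    intro i _
    have h1 : HasDerivAt (fun y : ℝ => y + (i:ℝ)) 1 x := (hasDerivAt_id x).add_const _
    have h2 := (hasDerivAt_zpow (-(j:ℤ)) (x + i) (Or.inl (by positivity))).comp x h1
    simpa [Function.comp_def] using h2
  have heq : (∑ i ∈ Finset.range (N + 1), (-(j:ℝ)) * (x + (i:ℝ)) ^ (-((j:ℕ):ℤ) - 1))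
      = -(j:ℝ) * Pz (j+1) N x := by
    rw [Pz, Finset.mul_sum]
    refine Finset.sum_congr rfl fun i _ => ?_
    congr 1
    push_cast
    ring
  rw [← heq]
  exact h

-- helper uniform convergence lemmas
lemma tuo_const_seq {c : ℕ → ℝ} {a : ℝ} (h : Tendsto c atTop (𝓝 a)) (s : Set ℝ) :
    TendstoUniformlyOn (fun N (_ : ℝ) => c N) (fun _ => a) atTop s := by
  rw [Metric.tendstoUniformlyOn_iff]
  intro ε hε
  filter_upwards [Metric.tendsto_nhds.mp h ε hε] with N hN y _
  rwa [dist_comm] at hN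

lemma tuo_self (F : ℝ → ℝ) (s : Set ℝ) :
    TendstoUniformlyOn (fun _ : ℕ => F) F atTop s := by
  rw [Metric.tendstoUniformlyOn_iff]
  intro ε hε
  filter_upwards with n y _
  simpa using hε

lemma tuo_succ {F : ℕ → ℝ → ℝ} {g : ℝ → ℝ} {s : Set ℝ}
    (h : TendstoUniformlyOn F g atTop s) :
    TendstoUniformlyOn (fun N => F (N + 1)) g atTop s := by
  rw [Metric.tendstoUniformlyOn_iff] at h ⊢
  intro ε hε
  have := h ε hε
  rw [eventually_atTop] at this ⊢
  obtain ⟨a, ha⟩ := this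
  exact ⟨a, fun n hn => ha (n + 1) (by omega)⟩

lemma tuo_cmul {F : ℕ → ℝ → ℝ} {g : ℝ → ℝ} {s : Set ℝ} (c : ℝ)
    (h : TendstoUniformlyOn F g atTop s) :
    TendstoUniformlyOn (fun N y => c * F N y) (fun y => c * g y) atTop s := by
  rw [Metric.tendstoUniformlyOn_iff] at h ⊢
  intro ε hε
  rcases eq_or_ne c 0 with rfl | hc
  · filter_upwards with n y _; simpa using hε
  · filter_upwards [h (ε / |c|) (by positivity)] with n hn y hy
    have := hn y hy
    rw [Real.dist_eq] at this ⊢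
    rw [← mul_sub, abs_mul]
    calc |c| * |g y - F n y| < |c| * (ε / |c|) := by
          apply mul_lt_mul_of_pos_left this (abs_pos.2 hc)
      _ = ε := by field_simp
-- uniform convergence of Pz to Gz
lemma summable_zpow {z : ℝ} (hz : 0 < z) {j : ℕ} (hj : 2 ≤ j) :
    Summable (fun i : ℕ => (z + i) ^ (-(j:ℤ))) := by
  obtain ⟨m, rfl⟩ : ∃ m, j = m + 2 := ⟨j - 2, by omega⟩
  simpa only [zpow_negNat] using summable_pow_inv hz m

lemma tendsto_Pz {j : ℕ} (hj : 2 ≤ j) {y : ℝ} (hy : 0 < y) :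
    Tendsto (fun N => Pz j N y) atTop (𝓝 (Gz j y)) := by
  have h := (summable_zpow hy hj).hasSum.tendsto_sum_nat
  exact h.comp (tendsto_add_atTop_nat 1)

lemma tuo_Pz {δ R : ℝ} (hδ : 0 < δ) (hδ1 : δ ≤ 1) {j : ℕ} (hj : 2 ≤ j) :
    TendstoUniformlyOn (fun N y => Pz j N y) (Gz j) atTop (Ioo δ R) := by
  obtain ⟨m, rfl⟩ : ∃ m, j = m + 2 := ⟨j - 2, by omega⟩
  have hu : Summable (fun i : ℕ => (δ ^ m)⁻¹ * ((δ + i) ^ 2)⁻¹) :=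
    (summable_pow_inv hδ 0).mul_left _
  have base := tendstoUniformlyOn_tsum_nat (s := Ioo δ R)
    (f := fun (i : ℕ) (y : ℝ) => (y + i) ^ (-((m + 2 : ℕ) : ℤ))) hu (fun i y hy => by
    obtain ⟨hy1, hy2⟩ := hy
    have hyi : (0:ℝ) < y + i := by have := hδ.trans hy1; positivity
    show |(y + (i:ℝ)) ^ (-((m + 2 : ℕ) : ℤ))| ≤ (δ ^ m)⁻¹ * ((δ + i) ^ 2)⁻¹
    rw [zpow_negNat, abs_inv, abs_of_nonneg (by positivity), ← mul_inv]
    have hstep : δ ^ m * (δ + i) ^ 2 ≤ (y + i) ^ (m + 2) := by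
      calc δ ^ m * (δ + i) ^ 2 ≤ (δ + i) ^ m * (δ + i) ^ 2 := by
            apply mul_le_mul_of_nonneg_right (pow_le_pow_left₀ hδ.le (by linarith) m)
              (by positivity)
        _ = (δ + i) ^ (m + 2) := by ring
        _ ≤ (y + i) ^ (m + 2) := pow_le_pow_left₀ (by positivity) (by linarith) _
    rw [inv_le_inv₀ (by positivity) (by positivity)]
    exact hstep)
  exact tuo_succ base

-- uniform convergence of dseq to dg
lemma tuo_dseq {δ R : ℝ} (hδ : 0 < δ) (hR : R > 0) :
    TendstoUniformlyOn dseq dg atTop (Ioo δ R) := by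
  have hsummu : Summable (fun i : ℕ => R * (((i:ℝ) + 1) ^ 2)⁻¹) := by
    apply Summable.mul_left
    have := summable_pow_inv (zero_lt_one (α := ℝ)) 0
    simpa [add_comm] using this
  have h3 : TendstoUniformlyOn
      (fun N (y : ℝ) => ∑ i ∈ Finset.range N, (((i:ℝ) + 1)⁻¹ - (y + i + 1)⁻¹))
      (fun y : ℝ => ∑' i : ℕ, (((i:ℝ) + 1)⁻¹ - (y + i + 1)⁻¹)) atTop (Ioo δ R) := by
    apply tendstoUniformlyOn_tsum_nat hsummu
    intro i y hy
    obtain ⟨hy1, hy2⟩ := hy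
    have hy0 : (0:ℝ) < y := hδ.trans hy1
    have h1 : (0:ℝ) < (i:ℝ) + 1 := by positivity
    have h2 : (0:ℝ) < y + i + 1 := by positivity
    have heq : ((i:ℝ) + 1)⁻¹ - (y + i + 1)⁻¹ = y * (((i:ℝ) + 1) * (y + i + 1))⁻¹ := by
      field_simp
      ring
    rw [Real.norm_eq_abs, heq, abs_of_nonneg (by positivity)]
    apply mul_le_mul (le_of_lt hy2) _ (by positivity) hR.le
    rw [inv_le_inv₀ (by positivity) (by positivity)]
    have : (i:ℝ) + 1 ≤ y + i + 1 := by linarith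
    calc ((i:ℝ) + 1) ^ 2 = ((i:ℝ) + 1) * ((i:ℝ) + 1) := sq ((i:ℝ)+1)
      _ ≤ ((i:ℝ) + 1) * (y + i + 1) := by
          apply mul_le_mul_of_nonneg_left this (by positivity)
  have dseq_eq : ∀ (N : ℕ) (y : ℝ), 0 < y → dseq N y =
      (Real.log N - (harmonic N : ℝ)) + -y⁻¹
        + ∑ i ∈ Finset.range N, (((i:ℝ) + 1)⁻¹ - (y + i + 1)⁻¹) := by
    intro N y hy
    unfold dseq Pz
    have hsum1 : ∑ i ∈ Finset.range (N+1), (y + (i:ℝ)) ^ (-((1:ℕ):ℤ))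
        = (∑ i ∈ Finset.range N, (y + (i:ℝ) + 1)⁻¹) + y⁻¹ := by
      rw [Finset.sum_range_succ']
      congr 1
      · exact Finset.sum_congr rfl fun i _ => by
          rw [zpow_negNat, pow_one]; congr 1; push_cast; ring
      · rw [zpow_negNat, pow_one]; norm_num
    have hharm : (harmonic N : ℝ) = ∑ i ∈ Finset.range N, ((i:ℝ) + 1)⁻¹ := by
      rw [harmonic]; push_cast; rfl
    rw [hsum1, hharm, Finset.sum_sub_distrib]
    ring
  have h1 : TendstoUniformlyOn
      (fun (N : ℕ) (_ : ℝ) => Real.log N - (harmonic N : ℝ))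
      (fun _ => -Real.eulerMascheroniConstant) atTop (Ioo δ R) := by
    apply tuo_const_seq
    have := Real.tendsto_harmonic_sub_log.neg
    simpa [neg_sub] using this
  have h2 := tuo_self (fun y : ℝ => -y⁻¹) (Ioo δ R)
  have hcomb := (h1.add h2).add h3
  have hlim : TendstoUniformlyOn
      (fun (N : ℕ) (y : ℝ) => (Real.log N - (harmonic N : ℝ)) + -y⁻¹
        + ∑ i ∈ Finset.range N, (((i:ℝ) + 1)⁻¹ - (y + i + 1)⁻¹)) dg atTop (Ioo δ R) := by
    have hdg : dg = (fun y : ℝ => ((-Real.eulerMascheroniConstant) + -y⁻¹)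
        + ∑' i : ℕ, (((i:ℝ) + 1)⁻¹ - (y + i + 1)⁻¹)) := by
      funext y; rfl
    rw [hdg]
    apply hcomb.congr
    filter_upwards with N
    intro y _
    simp only [Pi.add_apply]
  apply hlim.congr
  filter_upwards with N
  intro y hy
  exact (dseq_eq N y (hδ.trans hy.1)).symm
-- derivative chain
lemma hasDerivAt_LG {x : ℝ} (hx : 0 < x) : HasDerivAt LG (dg x) x := by
  set δ := min (x/2) (1/2) with hδdef
  have hδ : 0 < δ := by positivity
  have hδx : δ < x := by
    have : x/2 < x := by linarith
    have h2 := min_le_left (x/2) (1/2:ℝ)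
    simp only [hδdef]
    linarith
  have hs : IsOpen (Ioo δ (x+1)) := isOpen_Ioo
  apply hasDerivAt_of_tendstoLocallyUniformlyOn hs
    ((tuo_dseq hδ (by linarith)).tendstoLocallyUniformlyOn)
    (Filter.Eventually.of_forall fun N y hy => hasDerivAt_fseq N (hδ.trans hy.1))
    (fun y hy => tendsto_fseq (hδ.trans hy.1))
    (⟨hδx, by linarith⟩ : x ∈ Ioo δ (x+1))

lemma hasDerivAt_dg {x : ℝ} (hx : 0 < x) : HasDerivAt dg (Gz 2 x) x := by
  set δ := min (x/2) (1/2) with hδdef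
  have hδ : 0 < δ := by positivity
  have hδ1 : δ ≤ 1 := by
    have := min_le_right (x/2) (1/2:ℝ); simp only [hδdef]; linarith
  have hδx : δ < x := by
    have : x/2 < x := by linarith
    have h2 := min_le_left (x/2) (1/2:ℝ)
    simp only [hδdef]; linarith
  have hs : IsOpen (Ioo δ (x+1)) := isOpen_Ioo
  apply hasDerivAt_of_tendstoLocallyUniformlyOn hs
    ((tuo_Pz hδ hδ1 (le_refl 2)).tendstoLocallyUniformlyOn)
    (Filter.Eventually.of_forall fun N y hy => ?_)
    (fun y hy => ((tuo_dseq hδ (by linarith)).tendsto_at hy))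
    (⟨hδx, by linarith⟩ : x ∈ Ioo δ (x+1))
  -- HasDerivAt (dseq N) (Pz 2 N y) y
  have h := (hasDerivAt_Pz 1 N (hδ.trans hy.1)).const_sub (Real.log N)
  simpa [dseq] using h

lemma hasDerivAt_Gz {j : ℕ} (hj : 2 ≤ j) {x : ℝ} (hx : 0 < x) :
    HasDerivAt (Gz j) (-(j:ℝ) * Gz (j+1) x) x := by
  set δ := min (x/2) (1/2) with hδdef
  have hδ : 0 < δ := by positivity
  have hδ1 : δ ≤ 1 := by
    have := min_le_right (x/2) (1/2:ℝ); simp only [hδdef]; linarith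
  have hδx : δ < x := by
    have : x/2 < x := by linarith
    have h2 := min_le_left (x/2) (1/2:ℝ)
    simp only [hδdef]; linarith
  have hs : IsOpen (Ioo δ (x+1)) := isOpen_Ioo
  apply hasDerivAt_of_tendstoLocallyUniformlyOn hs
    ((tuo_cmul (-(j:ℝ)) (tuo_Pz hδ hδ1 (by omega : 2 ≤ j + 1))).tendstoLocallyUniformlyOn)
    (Filter.Eventually.of_forall fun N y hy => (hasDerivAt_Pz j N (hδ.trans hy.1)))
    (fun y hy => tendsto_Pz hj (hδ.trans hy.1))
    (⟨hδx, by linarith⟩ : x ∈ Ioo δ (x+1))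

-- the polygamma series
lemma iteratedDeriv_LG_eq (m : ℕ) :
    ∀ x : ℝ, 0 < x →
      iteratedDeriv (m + 2) LG x = (-1:ℝ)^(m+2) * (m+1).factorial * Gz (m+2) x := by
  induction m with
  | zero =>
    intro x hx
    have h1 : deriv LG =ᶠ[𝓝 x] dg := by
      filter_upwards [isOpen_Ioi.mem_nhds hx] with y hy
      exact (hasDerivAt_LG hy).deriv
    rw [show (0+2 : ℕ) = 1 + 1 from rfl, iteratedDeriv_succ, iteratedDeriv_one,
      h1.deriv_eq, (hasDerivAt_dg hx).deriv]
    norm_num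
  | succ m ih =>
    intro x hx
    show iteratedDeriv ((m+2)+1) LG x = (-1:ℝ)^(m+3) * ((m+2).factorial : ℝ) * Gz (m+3) x
    have h1 : iteratedDeriv (m+2) LG =ᶠ[𝓝 x]
        fun y => (-1:ℝ)^(m+2) * (m+1).factorial * Gz (m+2) y := by
      filter_upwards [isOpen_Ioi.mem_nhds hx] with y hy
      exact ih y hy
    have h2 : HasDerivAt (fun y => (-1:ℝ)^(m+2) * (m+1).factorial * Gz (m+2) y)
        ((-1:ℝ)^(m+2) * (m+1).factorial * (-((m+2:ℕ):ℝ) * Gz (m+3) x)) x :=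
      (hasDerivAt_Gz (by omega) hx).const_mul _
    rw [iteratedDeriv_succ, h1.deriv_eq, h2.deriv]
    have hfac : ((m+2:ℕ) : ℝ) * ((m+1).factorial : ℝ) = ((m+2).factorial : ℝ) := by
      rw [show (m+2).factorial = (m+2) * (m+1).factorial from rfl]
      push_cast; ring
    calc (-1:ℝ)^(m+2) * ((m+1).factorial : ℝ) * (-((m+2:ℕ):ℝ) * Gz (m+3) x)
        = (-1:ℝ)^(m+3) * (((m+2:ℕ):ℝ) * ((m+1).factorial : ℝ)) * Gz (m+3) x := by
          push_cast; ring
      _ = (-1:ℝ)^(m+3) * ((m+2).factorial : ℝ) * Gz (m+3) x := by rw [hfac]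
-- absolute value bound for iterated derivatives of log Gamma
lemma Gz_nonneg (j : ℕ) {z : ℝ} (hz : 0 < z) : 0 ≤ Gz j z :=
  tsum_nonneg fun i => by
    rw [zpow_negNat]
    positivity

lemma abs_iteratedDeriv_LG_le (m : ℕ) {z : ℝ} (hz : 0 < z) :
    |iteratedDeriv (m + 2) LG z| ≤
      ((m + 1).factorial : ℝ) * (z ^ (m + 2))⁻¹ + (m.factorial : ℝ) * (z ^ (m + 1))⁻¹ := by
  rw [iteratedDeriv_LG_eq m z hz, abs_mul, abs_mul, abs_pow, abs_neg, abs_one, one_pow, one_mul,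
    abs_of_nonneg (by positivity : (0:ℝ) ≤ ((m+1).factorial : ℝ)),
    abs_of_nonneg (Gz_nonneg _ hz)]
  have hGz : Gz (m + 2) z = ∑' i : ℕ, ((z + i) ^ (m + 2))⁻¹ :=
    tsum_congr fun i => zpow_negNat _ _
  have hle : Gz (m + 2) z ≤ (z ^ (m + 2))⁻¹ + (1 / ((m:ℝ) + 1)) * (z ^ (m + 1))⁻¹ := by
    rw [hGz]; exact tsum_pow_inv_le hz m
  calc ((m+1).factorial : ℝ) * Gz (m + 2) z
      ≤ ((m+1).factorial : ℝ) * ((z ^ (m + 2))⁻¹ + (1 / ((m:ℝ) + 1)) * (z ^ (m + 1))⁻¹) := by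
        apply mul_le_mul_of_nonneg_left hle (by positivity)
    _ = ((m+1).factorial : ℝ) * (z ^ (m + 2))⁻¹
        + (((m+1).factorial : ℝ) / ((m:ℝ) + 1)) * (z ^ (m + 1))⁻¹ := by ring
    _ = ((m+1).factorial : ℝ) * (z ^ (m + 2))⁻¹ + (m.factorial : ℝ) * (z ^ (m + 1))⁻¹ := by
        congr 2
        rw [show (m+1).factorial = (m+1) * m.factorial from rfl]
        push_cast
        field_simp
open MeasureTheory ProbabilityTheory

/-- The `j`-th cumulant of a real random variable `X`, defined as the `j`-th derivative
at `0` of the cumulant generating function `t ↦ log E[exp (t X)]`. -/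
noncomputable def cumulant {Ω : Type*} [MeasurableSpace Ω] (X : Ω → ℝ) (μ : Measure Ω)
    (j : ℕ) : ℝ :=
  iteratedDeriv j (fun t => cgf X μ t) 0

/-- The polygamma function of order `j`: the `(j+1)`-st derivative of `log ∘ Γ`. -/
noncomputable def polygamma (j : ℕ) (z : ℝ) : ℝ :=
  iteratedDeriv (j + 1) (fun x => Real.log (Real.Gamma x)) z

lemma polygamma_eq (j : ℕ) (z : ℝ) : polygamma j z = iteratedDeriv (j + 1) LG z := rfl

-- Part 1 as a standalone lemma
lemma part1 {Ω : Type*} [MeasurableSpace Ω]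
    (μ : Measure Ω) [IsProbabilityMeasure μ] (X : Ω → ℝ)
    (n : ℕ) (β : ℝ) (hβ0 : 0 ≤ β)
    (ε : ℝ) (hε : 0 < ε)
    (hmellin : ∀ s : ℝ, |s| < ε →
      cgf X μ s =
        ∑ k ∈ Finset.range n,
          (Real.log (Real.Gamma (1 + k * β / 2)) + Real.log (Real.Gamma (1 + s + k * β / 2)) -
            2 * Real.log (Real.Gamma (1 + s / 2 + k * β / 2)))) :
    ∀ j : ℕ, 2 ≤ j →
      cumulant X μ j =
        (((2 : ℝ) ^ (j - 1) - 1) / 2 ^ (j - 1)) *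
          ∑ k ∈ Finset.range n, polygamma (j - 1) (1 + k * β / 2) := by
  intro j hj
  set U : Set ℝ := Set.Ioo (-(1:ℝ)/2) (1/2) with hU
  have hUopen : IsOpen U := isOpen_Ioo
  have h0U : (0:ℝ) ∈ U := by constructor <;> norm_num
  -- smoothness of the building blocks
  have hu : ∀ k : ℕ, ContDiffOn ℝ ∞ (fun s : ℝ => LG (1 + s + k * β / 2)) U := by
    intro k
    apply contDiffOn_LG.comp
    · exact (ContDiff.contDiffOn (by fun_prop))
    · intro s hs
      have h1 : -(1:ℝ)/2 < s := hs.1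
      have h2 : 0 ≤ (k:ℝ) * β / 2 := by positivity
      simp only [Set.mem_Ioi]
      linarith
  have hv : ∀ k : ℕ, ContDiffOn ℝ ∞ (fun s : ℝ => LG (1 + s / 2 + k * β / 2)) U := by
    intro k
    apply contDiffOn_LG.comp
    · refine ContDiff.contDiffOn ?_
      exact (contDiff_const.add ((contDiff_id (𝕜 := ℝ)).div_const (2:ℝ))).add contDiff_const
    · intro s hs
      have h1 : -(1:ℝ)/2 < s := hs.1
      have h2 : 0 ≤ (k:ℝ) * β / 2 := by positivity
      simp only [Set.mem_Ioi]
      linarith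
  have hh : ∀ k ∈ Finset.range n, ContDiffOn ℝ ∞
      (fun s : ℝ => Real.log (Real.Gamma (1 + k * β / 2)) + LG (1 + s + k * β / 2)
        - 2 * LG (1 + s / 2 + k * β / 2)) U := by
    intro k _
    apply ContDiffOn.sub
    · exact ContDiffOn.add contDiffOn_const (hu k)
    · exact ContDiffOn.mul contDiffOn_const (hv k)
  -- replace cgf by the explicit formula
  have hcongr : (fun t => cgf X μ t) =ᶠ[nhds (0:ℝ)]
      (fun s => ∑ k ∈ Finset.range n,
        (Real.log (Real.Gamma (1 + k * β / 2)) + LG (1 + s + k * β / 2)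
          - 2 * LG (1 + s / 2 + k * β / 2))) := by
    filter_upwards [Metric.ball_mem_nhds (0:ℝ) hε] with s hs
    rw [mem_ball_zero_iff, Real.norm_eq_abs] at hs
    exact hmellin s hs
  rw [cumulant, hcongr.iteratedDeriv_eq j,
    iteratedDeriv_finsetSum hUopen (Finset.range n) hh j 0 h0U]
  -- per-term computation
  have hterm : ∀ k ∈ Finset.range n,
      iteratedDeriv j (fun s : ℝ => Real.log (Real.Gamma (1 + k * β / 2)) + LG (1 + s + k * β / 2)
        - 2 * LG (1 + s / 2 + k * β / 2)) 0
      = (1 - 2 * (1/2:ℝ)^j) * iteratedDeriv j LG (1 + k * β / 2) := by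
    intro k hk
    rw [iteratedDeriv_linComb hUopen (hu k) (hv k) _ j (by omega) 0 h0U]
    have ha : (0:ℝ) ≤ (k:ℝ) * β / 2 := by positivity
    have hmem : (1:ℝ) * 0 + (1 + k * β / 2) ∈ Set.Ioi (0:ℝ) := by
      simp only [Set.mem_Ioi]; linarith
    have hmem2 : (1/2:ℝ) * 0 + (1 + k * β / 2) ∈ Set.Ioi (0:ℝ) := by
      simp only [Set.mem_Ioi]; linarith
    have e1 : (fun s : ℝ => LG (1 + s + k * β / 2))
        = fun s : ℝ => LG (1 * s + (1 + k * β / 2)) := by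
      funext s; congr 1; ring
    have e2 : (fun s : ℝ => LG (1 + s / 2 + k * β / 2))
        = fun s : ℝ => LG ((1/2) * s + (1 + k * β / 2)) := by
      funext s; congr 1; ring
    rw [e1, e2, iteratedDeriv_comp_affine isOpen_Ioi contDiffOn_LG 1 (1 + k * β / 2) j 0 hmem,
      iteratedDeriv_comp_affine isOpen_Ioi contDiffOn_LG (1/2) (1 + k * β / 2) j 0 hmem2]
    have e3 : (1:ℝ) * 0 + (1 + (k:ℝ) * β / 2) = 1 + k * β / 2 := by ring
    have e4 : (1/2:ℝ) * 0 + (1 + (k:ℝ) * β / 2) = 1 + k * β / 2 := by ring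
    rw [e3, e4]
    ring
  rw [Finset.sum_congr rfl hterm, ← Finset.mul_sum]
  -- coefficient identity and polygamma
  obtain ⟨i, rfl⟩ : ∃ i, j = i + 1 := ⟨j - 1, by omega⟩
  have hcoef : (1 - 2 * (1/2:ℝ)^(i+1)) = ((2:ℝ)^i - 1) / 2^i := by
    have h2i : (2:ℝ)^i ≠ 0 := by positivity
    field_simp
    have h2 : ((1:ℝ)/2)^i * 2^i = 1 := by rw [← mul_pow]; norm_num
    linear_combination (-1:ℝ) * h2
  have hpoly : ∀ k ∈ Finset.range n,
      iteratedDeriv (i+1) LG (1 + k * β / 2) = polygamma (i + 1 - 1) (1 + k * β / 2) := by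
    intro k _
    rw [polygamma_eq]
    congr 1
  rw [Finset.sum_congr rfl hpoly, hcoef]
  simp
theorem circular_ensemble_cumulants {Ω : Type*} [MeasurableSpace Ω]
    (μ : Measure Ω) [IsProbabilityMeasure μ] (X : Ω → ℝ)
    (n : ℕ) (hn : 1 ≤ n) (β : ℝ) (hβ : β = 1 ∨ β = 2 ∨ β = 4)
    (ε : ℝ) (hε : 0 < ε)
    (hmellin : ∀ s : ℝ, |s| < ε →
      cgf X μ s =
        ∑ k ∈ Finset.range n,
          (Real.log (Real.Gamma (1 + k * β / 2)) + Real.log (Real.Gamma (1 + s + k * β / 2)) -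
            2 * Real.log (Real.Gamma (1 + s / 2 + k * β / 2)))) :
    (∀ j : ℕ, 2 ≤ j →
      cumulant X μ j =
        (((2 : ℝ) ^ (j - 1) - 1) / 2 ^ (j - 1)) *
          ∑ k ∈ Finset.range n, polygamma (j - 1) (1 + k * β / 2)) ∧
    (β = 2 → ∀ j : ℕ, 3 ≤ j →
      |cumulant X μ j| ≤
          (((2 : ℝ) ^ (j - 1) - 1) / 2 ^ (j - 1)) *
            (2 + ∑' k : ℕ, (((j - 2).factorial : ℝ) / ((k : ℝ) + 1) ^ (j - 1) +
              ((j - 1).factorial : ℝ) / ((k : ℝ) + 1) ^ j)) ∧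
        (((2 : ℝ) ^ (j - 1) - 1) / 2 ^ (j - 1)) *
            (2 + ∑' k : ℕ, (((j - 2).factorial : ℝ) / ((k : ℝ) + 1) ^ (j - 1) +
              ((j - 1).factorial : ℝ) / ((k : ℝ) + 1) ^ j)) ≤
          (j.factorial : ℝ) * (2 * Real.pi ^ 2 / 3)) := by
  have hβ0 : 0 ≤ β := by rcases hβ with h | h | h <;> rw [h] <;> norm_num
  have hpart1 := part1 μ X n β hβ0 ε hε hmellin
  refine ⟨hpart1, ?_⟩
  intro hβ2 j hj
  subst hβ2
  obtain ⟨p, rfl⟩ : ∃ p, j = p + 3 := ⟨j - 3, by omega⟩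
  simp only [show p + 3 - 1 = p + 2 from rfl, show p + 3 - 2 = p + 1 from rfl]
  set c : ℝ := ((2:ℝ) ^ (p + 2) - 1) / 2 ^ (p + 2) with hc
  have hc0 : 0 ≤ c := by
    apply div_nonneg _ (by positivity)
    have : (1:ℝ) ≤ 2 ^ (p + 2) := one_le_pow₀ (by norm_num)
    linarith
  have hc1 : c ≤ 1 := by
    rw [hc, div_le_one (by positivity)]
    linarith
  -- the cumulant formula
  have hcum : cumulant X μ (p + 3)
      = c * ∑ k ∈ Finset.range n, polygamma (p + 2) (1 + (k : ℝ)) := by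
    rw [hpart1 (p + 3) (by omega)]
    simp only [show p + 3 - 1 = p + 2 from rfl]
    congr 1
    refine Finset.sum_congr rfl fun k _ => ?_
    congr 1
    ring
  -- termwise bound
  set t : ℕ → ℝ := fun k => ((p+1).factorial : ℝ) / ((k:ℝ)+1) ^ (p+2)
      + ((p+2).factorial : ℝ) / ((k:ℝ)+1) ^ (p+3) with ht
  have hb : ∀ k : ℕ, |polygamma (p + 2) (1 + (k : ℝ))| ≤ t k := by
    intro k
    have h1 : (0:ℝ) < 1 + (k:ℝ) := by positivity
    have h2 := abs_iteratedDeriv_LG_le (p + 1) h1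
    have e : ((k:ℝ) + 1) = (1 + (k:ℝ)) := add_comm _ _
    show |polygamma (p + 2) (1 + (k:ℝ))| ≤
      ((p+1).factorial : ℝ) / ((k:ℝ)+1) ^ (p+2) + ((p+2).factorial : ℝ) / ((k:ℝ)+1) ^ (p+3)
    rw [e, polygamma_eq]
    simp only [div_eq_mul_inv]
    calc |iteratedDeriv (p + 2 + 1) LG (1 + (k:ℝ))|
        = |iteratedDeriv (p + 1 + 2) LG (1 + (k:ℝ))| := by norm_num
      _ ≤ ((p+2).factorial : ℝ) * ((1 + (k:ℝ)) ^ (p+3))⁻¹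
          + ((p+1).factorial : ℝ) * ((1 + (k:ℝ)) ^ (p+2))⁻¹ := h2
      _ = ((p+1).factorial : ℝ) * ((1 + (k:ℝ)) ^ (p+2))⁻¹
          + ((p+2).factorial : ℝ) * ((1 + (k:ℝ)) ^ (p+3))⁻¹ := add_comm _ _
  -- summability and tsum bound
  have hS1 : Summable (fun k : ℕ => ((1 + (k:ℝ)) ^ (p+2))⁻¹) := summable_pow_inv one_pos p
  have hS2 : Summable (fun k : ℕ => ((1 + (k:ℝ)) ^ (p+3))⁻¹) := summable_pow_inv one_pos (p+1)
  have hsummable : Summable t := by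
    rw [ht]
    simp only [div_eq_mul_inv]
    apply Summable.add
    · have := hS1.mul_left ((p+1).factorial : ℝ)
      simpa [add_comm] using this
    · have := hS2.mul_left ((p+2).factorial : ℝ)
      simpa [add_comm] using this
  have hT1 : ∑' k : ℕ, ((1 + (k:ℝ)) ^ (p+2))⁻¹ ≤ 2 := by
    have := tsum_pow_inv_le one_pos p
    have h2 : (1:ℝ) ^ (p+2) = 1 := one_pow _
    have h3 : (1:ℝ) ^ (p+1) = 1 := one_pow _
    rw [h2, h3] at this
    have h4 : 1 / ((p:ℝ) + 1) ≤ 1 := by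
      rw [div_le_one (by positivity)]
      linarith [Nat.cast_nonneg (α := ℝ) p]
    simp only [inv_one, mul_one] at this
    linarith
  have hT2 : ∑' k : ℕ, ((1 + (k:ℝ)) ^ (p+3))⁻¹ ≤ 2 := by
    have := tsum_pow_inv_le one_pos (p+1)
    simp only [one_pow, inv_one, mul_one] at this
    have h4 : 1 / ((p:ℝ) + 1 + 1) ≤ 1 := by
      rw [div_le_one (by positivity)]
      linarith [Nat.cast_nonneg (α := ℝ) p]
    push_cast at this ⊢
    linarith
  have htnonneg : ∀ k : ℕ, 0 ≤ t k := fun k => by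
    rw [ht]; positivity
  have htsum : ∑' k, t k ≤ 2 * ((p+1).factorial : ℝ) + 2 * ((p+2).factorial : ℝ) := by
    rw [ht]
    simp only [div_eq_mul_inv]
    rw [Summable.tsum_add ((by simpa [add_comm] using hS1.mul_left ((p+1).factorial : ℝ)) : Summable _)
      ((by simpa [add_comm] using hS2.mul_left ((p+2).factorial : ℝ)) : Summable _),
      tsum_mul_left, tsum_mul_left]
    have e : ∀ k : ℕ, ((k:ℝ) + 1) = (1 + (k:ℝ)) := fun k => add_comm _ _
    simp only [e]
    have := mul_le_mul_of_nonneg_left hT1 (by positivity : (0:ℝ) ≤ ((p+1).factorial : ℝ))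
    have := mul_le_mul_of_nonneg_left hT2 (by positivity : (0:ℝ) ≤ ((p+2).factorial : ℝ))
    linarith
  have hA0 : 0 ≤ ∑' k, t k := tsum_nonneg htnonneg
  -- first inequality
  have hineq1 : |cumulant X μ (p + 3)| ≤ c * (2 + ∑' k, t k) := by
    rw [hcum, abs_mul, abs_of_nonneg hc0]
    apply mul_le_mul_of_nonneg_left _ hc0
    calc |∑ k ∈ Finset.range n, polygamma (p + 2) (1 + (k : ℝ))|
        ≤ ∑ k ∈ Finset.range n, |polygamma (p + 2) (1 + (k : ℝ))| :=
          Finset.abs_sum_le_sum_abs _ _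
      _ ≤ ∑ k ∈ Finset.range n, t k := Finset.sum_le_sum fun k _ => hb k
      _ ≤ ∑' k, t k := Summable.sum_le_tsum _ (fun k _ => htnonneg k) hsummable
      _ ≤ 2 + ∑' k, t k := by linarith
  refine ⟨hineq1, ?_⟩
  -- second inequality
  have hfac1 : ((p+1).factorial : ℝ) ≤ ((p+2).factorial : ℝ) := by
    exact_mod_cast Nat.factorial_le (by omega)
  have hfac2 : (1:ℝ) ≤ ((p+2).factorial : ℝ) := by
    exact_mod_cast Nat.one_le_iff_ne_zero.2 (p+2).factorial_ne_zero
  have hfac3 : ((p+3).factorial : ℝ) = ((p:ℝ)+3) * ((p+2).factorial : ℝ) := by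
    rw [show (p+3).factorial = (p+3) * (p+2).factorial from rfl]
    push_cast; ring
  have hpi : (9:ℝ) ≤ Real.pi ^ 2 := by
    nlinarith [Real.pi_gt_three]
  calc c * (2 + ∑' k, t k) ≤ 1 * (2 + ∑' k, t k) :=
        mul_le_mul_of_nonneg_right hc1 (by linarith)
    _ = 2 + ∑' k, t k := one_mul _
    _ ≤ 2 + (2 * ((p+1).factorial : ℝ) + 2 * ((p+2).factorial : ℝ)) := by linarith
    _ ≤ 6 * ((p+2).factorial : ℝ) := by linarith
    _ ≤ ((p+3).factorial : ℝ) * (2 * Real.pi ^ 2 / 3) := by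
        rw [hfac3]
        have hp3 : (3:ℝ) ≤ (p:ℝ) + 3 := by linarith [Nat.cast_nonneg (α := ℝ) p]
        have h6 : (6:ℝ) ≤ 2 * Real.pi ^ 2 / 3 := by linarith
        nlinarith [hfac2, hp3, h6]
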